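/- Let G ⊆ ℝ² ≅ ℂ be the equilateral triangle with vertices z_k = exp(2πik/3), k = 0, 1, 2 (i.e. the convex hull of these three points). Then the minimum over t ∈ [0, 2π) of the product of the widths of G in the perpendicular directions (cos t, sin t) and (−sin t, cos t) equals 3√3/2, which is exactly twice the area of G (the area of G is 3√3/4). -/

import Mathlib

open MeasureTheory Real

/-- The equilateral triangle spanned by the three cube roots of unity. -/
noncomputable def equilateralTriangle : Set ℂ :=
  convexHull ℝ {z : ℂ | ∃ k : Fin 3, z = Complex.exp (2 * π * k * Complex.I / 3)}

noncomputable def vA : ℂ := 1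
noncomputable def vB : ℂ := ⟨-(1/2), Real.sqrt 3 / 2⟩
noncomputable def vC : ℂ := ⟨-(1/2), -(Real.sqrt 3 / 2)⟩

lemma exp_aux (r : ℝ) : Complex.exp ((r:ℂ) * Complex.I / 3) = ⟨Real.cos (r/3), Real.sin (r/3)⟩ := by
  have h : ((r:ℂ) * Complex.I / 3) = ((r/3 : ℝ) : ℂ) * Complex.I := by push_cast; ring
  apply Complex.ext <;> simp [h, Complex.exp_re, Complex.exp_im]

lemma cos23 : Real.cos (2*π/3) = -(1/2) := by
  have h4 : (2*π/3 : ℝ) = π - π/3 := by ring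
  rw [h4, Real.cos_pi_sub, Real.cos_pi_div_three]
lemma sin23 : Real.sin (2*π/3) = Real.sqrt 3/2 := by
  have h4 : (2*π/3 : ℝ) = π - π/3 := by ring
  rw [h4, Real.sin_pi_sub, Real.sin_pi_div_three]
lemma cos43 : Real.cos (4*π/3) = -(1/2) := by
  have h4 : (4*π/3 : ℝ) = π/3 + π := by ring
  rw [h4, Real.cos_add_pi, Real.cos_pi_div_three]
lemma sin43 : Real.sin (4*π/3) = -(Real.sqrt 3/2) := by
  have h4 : (4*π/3 : ℝ) = π/3 + π := by ring
  rw [h4, Real.sin_add_pi, Real.sin_pi_div_three]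

lemma exp_aux' (x : ℝ) : Complex.exp ((x:ℂ) * Complex.I) = ⟨Real.cos x, Real.sin x⟩ := by
  apply Complex.ext <;> simp [Complex.exp_re, Complex.exp_im]

lemma vertex_set_eq :
    {z : ℂ | ∃ k : Fin 3, z = Complex.exp (2 * π * k * Complex.I / 3)} = {vA, vB, vC} := by
  have key : ∀ n : ℕ, Complex.exp (2 * (π:ℂ) * (n:ℂ) * Complex.I / 3)
      = ⟨Real.cos (2*π*n/3), Real.sin (2*π*n/3)⟩ := by
    intro n
    rw [show 2 * (π:ℂ) * (n:ℂ) * Complex.I / 3 = ((2*π*n/3 : ℝ) : ℂ) * Complex.I by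
      push_cast; ring, exp_aux']
  ext z
  simp only [Set.mem_setOf_eq, Set.mem_insert_iff, Set.mem_singleton_iff]
  constructor
  · rintro ⟨k, rfl⟩
    fin_cases k
    · left
      show Complex.exp (2 * (π:ℂ) * ((0:ℕ):ℂ) * Complex.I / 3) = vA
      rw [key]; apply Complex.ext <;> simp [vA]
    · right; left
      show Complex.exp (2 * (π:ℂ) * ((1:ℕ):ℂ) * Complex.I / 3) = vB
      rw [key]; apply Complex.ext
      · show Real.cos (2*π*(1:ℕ)/3) = vB.re
        rw [show (2*π*(1:ℕ)/3 : ℝ) = 2*π/3 by push_cast; ring, cos23]; simp [vB]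
      · show Real.sin (2*π*(1:ℕ)/3) = vB.im
        rw [show (2*π*(1:ℕ)/3 : ℝ) = 2*π/3 by push_cast; ring, sin23]; simp [vB]
    · right; right
      show Complex.exp (2 * (π:ℂ) * ((2:ℕ):ℂ) * Complex.I / 3) = vC
      rw [key]; apply Complex.ext
      · show Real.cos (2*π*(2:ℕ)/3) = vC.re
        rw [show (2*π*(2:ℕ)/3 : ℝ) = 4*π/3 by push_cast; ring, cos43]; simp [vC]
      · show Real.sin (2*π*(2:ℕ)/3) = vC.im
        rw [show (2*π*(2:ℕ)/3 : ℝ) = 4*π/3 by push_cast; ring, sin43]; simp [vC]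
  · rintro (rfl | rfl | rfl)
    · refine ⟨0, ?_⟩
      show vA = Complex.exp (2 * (π:ℂ) * ((0:ℕ):ℂ) * Complex.I / 3)
      rw [key]; apply Complex.ext <;> simp [vA]
    · refine ⟨1, ?_⟩
      show vB = Complex.exp (2 * (π:ℂ) * ((1:ℕ):ℂ) * Complex.I / 3)
      rw [key]; apply Complex.ext
      · show vB.re = Real.cos (2*π*(1:ℕ)/3)
        rw [show (2*π*(1:ℕ)/3 : ℝ) = 2*π/3 by push_cast; ring, cos23]; simp [vB]
      · show vB.im = Real.sin (2*π*(1:ℕ)/3)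
        rw [show (2*π*(1:ℕ)/3 : ℝ) = 2*π/3 by push_cast; ring, sin23]; simp [vB]
    · refine ⟨2, ?_⟩
      show vC = Complex.exp (2 * (π:ℂ) * ((2:ℕ):ℂ) * Complex.I / 3)
      rw [key]; apply Complex.ext
      · show vC.re = Real.cos (2*π*(2:ℕ)/3)
        rw [show (2*π*(2:ℕ)/3 : ℝ) = 4*π/3 by push_cast; ring, cos43]; simp [vC]
      · show vC.im = Real.sin (2*π*(2:ℕ)/3)
        rw [show (2*π*(2:ℕ)/3 : ℝ) = 4*π/3 by push_cast; ring, sin43]; simp [vC]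

lemma tri_eq : equilateralTriangle = convexHull ℝ {vA, vB, vC} := by
  rw [equilateralTriangle, vertex_set_eq]

lemma isGreatest_hull (f : ℂ → ℝ) (hf : IsLinearMap ℝ f) :
    IsGreatest (f '' equilateralTriangle) (max (f vA) (max (f vB) (f vC))) := by
  rw [tri_eq]
  constructor
  · have hA : f vA ∈ f '' convexHull ℝ {vA, vB, vC} :=
      ⟨vA, subset_convexHull _ _ (by simp), rfl⟩
    have hB : f vB ∈ f '' convexHull ℝ {vA, vB, vC} :=
      ⟨vB, subset_convexHull _ _ (by simp), rfl⟩
    have hC : f vC ∈ f '' convexHull ℝ {vA, vB, vC} :=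
      ⟨vC, subset_convexHull _ _ (by simp), rfl⟩
    rcases max_choice (f vB) (f vC) with h | h <;>
      rcases max_choice (f vA) (max (f vB) (f vC)) with h' | h' <;> rw [h'] <;> try rw [h]
    all_goals first | exact hA | exact hB | exact hC
  · rintro x ⟨z, hz, rfl⟩
    have hsub : convexHull ℝ {vA, vB, vC} ⊆
        {w : ℂ | f w ≤ max (f vA) (max (f vB) (f vC))} := by
      apply convexHull_min ?_ (convex_halfSpace_le hf _)
      rintro w (rfl | rfl | rfl) <;> simp only [Set.mem_setOf_eq]
      · exact le_max_left _ _
      · exact le_trans (le_max_left _ _) (le_max_right _ _)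
      · exact le_trans (le_max_right _ _) (le_max_right _ _)
    exact hsub hz

lemma isLeast_hull (f : ℂ → ℝ) (hf : IsLinearMap ℝ f) :
    IsLeast (f '' equilateralTriangle) (min (f vA) (min (f vB) (f vC))) := by
  rw [tri_eq]
  constructor
  · have hA : f vA ∈ f '' convexHull ℝ {vA, vB, vC} :=
      ⟨vA, subset_convexHull _ _ (by simp), rfl⟩
    have hB : f vB ∈ f '' convexHull ℝ {vA, vB, vC} :=
      ⟨vB, subset_convexHull _ _ (by simp), rfl⟩
    have hC : f vC ∈ f '' convexHull ℝ {vA, vB, vC} :=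
      ⟨vC, subset_convexHull _ _ (by simp), rfl⟩
    rcases min_choice (f vB) (f vC) with h | h <;>
      rcases min_choice (f vA) (min (f vB) (f vC)) with h' | h' <;> rw [h'] <;> try rw [h]
    all_goals first | exact hA | exact hB | exact hC
  · rintro x ⟨z, hz, rfl⟩
    have hsub : convexHull ℝ {vA, vB, vC} ⊆
        {w : ℂ | min (f vA) (min (f vB) (f vC)) ≤ f w} := by
      apply convexHull_min ?_ (convex_halfSpace_ge hf _)
      rintro w (rfl | rfl | rfl) <;> simp only [Set.mem_setOf_eq]
      · exact min_le_left _ _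
      · exact le_trans (min_le_right _ _) (min_le_left _ _)
      · exact le_trans (min_le_right _ _) (min_le_right _ _)
    exact hsub hz
lemma islin (p q : ℝ) : IsLinearMap ℝ (fun z : ℂ => z.re * p + z.im * q) := by
  constructor
  · intro a b; simp [Complex.add_re, Complex.add_im]; ring
  · intro r a; simp [Complex.smul_re, Complex.smul_im, smul_eq_mul]; ring

lemma sSup_tri (p q : ℝ) : sSup ((fun z : ℂ => z.re * p + z.im * q) '' equilateralTriangle)
    = max p (max (-(1/2)*p + Real.sqrt 3/2*q) (-(1/2)*p - Real.sqrt 3/2*q)) := by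
  have h := (isGreatest_hull _ (islin p q)).csSup_eq
  rw [h]
  simp only [vA, vB, vC, Complex.one_re, Complex.one_im]
  norm_num
  ring_nf

lemma sInf_tri (p q : ℝ) : sInf ((fun z : ℂ => z.re * p + z.im * q) '' equilateralTriangle)
    = min p (min (-(1/2)*p + Real.sqrt 3/2*q) (-(1/2)*p - Real.sqrt 3/2*q)) := by
  have h := (isLeast_hull _ (islin p q)).csInf_eq
  rw [h]
  simp only [vA, vB, vC, Complex.one_re, Complex.one_im]
  norm_num
  ring_nf

lemma core (c s w1 w2 : ℝ) (hc : 0 ≤ c) (hs : 0 ≤ s) (hcs : c^2 + s^2 = 1)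
    (ha : (3*c + Real.sqrt 3 * s)/2 ≤ w1) (hb : Real.sqrt 3 * s ≤ w1)
    (hc2 : Real.sqrt 3 * c ≤ w2) (hd : (3*s + Real.sqrt 3 * c)/2 ≤ w2) :
    3 * Real.sqrt 3 / 2 ≤ w1 * w2 := by
  have h3 : Real.sqrt 3 * Real.sqrt 3 = 3 := Real.mul_self_sqrt (by norm_num)
  have h3n : (0:ℝ) ≤ Real.sqrt 3 := Real.sqrt_nonneg 3
  have e2 : Real.sqrt 3 * c^2 + Real.sqrt 3 * s^2 = Real.sqrt 3 := by
    rw [show Real.sqrt 3 * c^2 + Real.sqrt 3 * s^2 = Real.sqrt 3 * (c^2 + s^2) by ring, hcs,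
      mul_one]
  rcases le_total s (1/2) with hhs | hhs
  · have hsq : (Real.sqrt 3 * s)^2 ≤ c^2 := by nlinarith
    have hkey : Real.sqrt 3 * s ≤ c := by
      have := Real.sqrt_le_sqrt hsq
      rwa [Real.sqrt_sq (by positivity), Real.sqrt_sq hc] at this
    have hprod : (3*c + Real.sqrt 3 * s)/2 * (Real.sqrt 3 * c) ≤ w1 * w2 :=
      mul_le_mul ha hc2 (by positivity) (le_trans (by positivity) ha)
    have expand : (3*c + Real.sqrt 3*s)/2*(Real.sqrt 3*c)
        = 3/2*(Real.sqrt 3*c^2) + 3/2*(s*c) := by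
      rw [show (3*c + Real.sqrt 3*s)/2*(Real.sqrt 3*c)
          = 3/2*(Real.sqrt 3*c^2) + (Real.sqrt 3*Real.sqrt 3)*(s*c)/2 by ring, h3]
      ring
    rw [expand] at hprod
    have hint : 0 ≤ s*c - Real.sqrt 3*s^2 := by nlinarith [mul_nonneg hs (sub_nonneg.2 hkey)]
    linarith
  · rcases le_total c (1/2) with hhc | hhc
    · have hsq : (Real.sqrt 3 * c)^2 ≤ s^2 := by nlinarith
      have hkey : Real.sqrt 3 * c ≤ s := by
        have := Real.sqrt_le_sqrt hsq
        rwa [Real.sqrt_sq (by positivity), Real.sqrt_sq hs] at this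
      have hprod : (Real.sqrt 3 * s) * ((3*s + Real.sqrt 3 * c)/2) ≤ w1 * w2 :=
        mul_le_mul hb hd (by positivity) (le_trans (by positivity) hb)
      have expand : (Real.sqrt 3*s)*((3*s + Real.sqrt 3*c)/2)
          = 3/2*(Real.sqrt 3*s^2) + 3/2*(c*s) := by
        rw [show (Real.sqrt 3*s)*((3*s + Real.sqrt 3*c)/2)
            = 3/2*(Real.sqrt 3*s^2) + (Real.sqrt 3*Real.sqrt 3)*(c*s)/2 by ring, h3]
        ring
      rw [expand] at hprod
      have hint : 0 ≤ c*s - Real.sqrt 3*c^2 := by nlinarith [mul_nonneg hc (sub_nonneg.2 hkey)]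
      linarith
    · have h4cs : Real.sqrt 3 ≤ 4*c*s := by
        have hcc : (0:ℝ) ≤ c^2 - 1/4 := by nlinarith
        have hss : (0:ℝ) ≤ s^2 - 1/4 := by nlinarith
        have h1 : Real.sqrt 3 ≤ Real.sqrt ((4*c*s)^2) := by
          apply Real.sqrt_le_sqrt; nlinarith [mul_nonneg hcc hss]
        rwa [Real.sqrt_sq (by positivity)] at h1
      have hprod : (3*c + Real.sqrt 3 * s)/2 * ((3*s + Real.sqrt 3 * c)/2) ≤ w1 * w2 :=
        mul_le_mul ha hd (by positivity) (le_trans (by positivity) ha)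
      have expand : (3*c + Real.sqrt 3*s)/2*((3*s + Real.sqrt 3*c)/2)
          = 3*(c*s) + 3/4*(Real.sqrt 3*c^2) + 3/4*(Real.sqrt 3*s^2) := by
        rw [show (3*c + Real.sqrt 3*s)/2*((3*s + Real.sqrt 3*c)/2)
            = 9/4*(c*s) + 3/4*(Real.sqrt 3*c^2) + 3/4*(Real.sqrt 3*s^2)
              + (Real.sqrt 3*Real.sqrt 3)*(c*s)/4 by ring, h3]
        ring
      rw [expand] at hprod
      linarith

lemma lower_aux (c s : ℝ) (hcs : c^2 + s^2 = 1) :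
    3 * Real.sqrt 3 / 2 ≤
      (max c (max (-(1/2)*c + Real.sqrt 3/2*s) (-(1/2)*c - Real.sqrt 3/2*s))
        - min c (min (-(1/2)*c + Real.sqrt 3/2*s) (-(1/2)*c - Real.sqrt 3/2*s))) *
      (max (-s) (max (-(1/2)*(-s) + Real.sqrt 3/2*c) (-(1/2)*(-s) - Real.sqrt 3/2*c))
        - min (-s) (min (-(1/2)*(-s) + Real.sqrt 3/2*c) (-(1/2)*(-s) - Real.sqrt 3/2*c))) := by
  set B := -(1/2)*c + Real.sqrt 3/2*s with hB
  set C := -(1/2)*c - Real.sqrt 3/2*s with hC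
  set A' := -s with hA'
  set B' := -(1/2)*(-s) + Real.sqrt 3/2*c with hB'
  set C' := -(1/2)*(-s) - Real.sqrt 3/2*c with hC'
  set w1 := max c (max B C) - min c (min B C) with hw1
  set w2 := max A' (max B' C') - min A' (min B' C') with hw2
  clear_value B C A' B' C' w1 w2
  have dAB : c - B ≤ w1 := by
    rw [hw1]
    exact sub_le_sub (le_max_left _ _) (le_trans (min_le_right _ _) (min_le_left _ _))
  have dAC : c - C ≤ w1 := by
    rw [hw1]
    exact sub_le_sub (le_max_left _ _) (le_trans (min_le_right _ _) (min_le_right _ _))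
  have dBA : B - c ≤ w1 := by
    rw [hw1]
    exact sub_le_sub (le_trans (le_max_left _ _) (le_max_right _ _)) (min_le_left _ _)
  have dCA : C - c ≤ w1 := by
    rw [hw1]
    exact sub_le_sub (le_trans (le_max_right _ _) (le_max_right _ _)) (min_le_left _ _)
  have dBC : B - C ≤ w1 := by
    rw [hw1]
    exact sub_le_sub (le_trans (le_max_left _ _) (le_max_right _ _))
      (le_trans (min_le_right _ _) (min_le_right _ _))
  have dCB : C - B ≤ w1 := by
    rw [hw1]
    exact sub_le_sub (le_trans (le_max_right _ _) (le_max_right _ _))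
      (le_trans (min_le_right _ _) (min_le_left _ _))
  have dB'C' : B' - C' ≤ w2 := by
    rw [hw2]
    exact sub_le_sub (le_trans (le_max_left _ _) (le_max_right _ _))
      (le_trans (min_le_right _ _) (min_le_right _ _))
  have dC'B' : C' - B' ≤ w2 := by
    rw [hw2]
    exact sub_le_sub (le_trans (le_max_right _ _) (le_max_right _ _))
      (le_trans (min_le_right _ _) (min_le_left _ _))
  have dB'A' : B' - A' ≤ w2 := by
    rw [hw2]
    exact sub_le_sub (le_trans (le_max_left _ _) (le_max_right _ _)) (min_le_left _ _)
  have dC'A' : C' - A' ≤ w2 := by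
    rw [hw2]
    exact sub_le_sub (le_trans (le_max_right _ _) (le_max_right _ _)) (min_le_left _ _)
  have dA'B' : A' - B' ≤ w2 := by
    rw [hw2]
    exact sub_le_sub (le_max_left _ _) (le_trans (min_le_right _ _) (min_le_left _ _))
  have dA'C' : A' - C' ≤ w2 := by
    rw [hw2]
    exact sub_le_sub (le_max_left _ _) (le_trans (min_le_right _ _) (min_le_right _ _))
  rcases le_total 0 c with hc | hc <;> rcases le_total 0 s with hs | hs
  · exact core c s w1 w2 hc hs hcs (by linarith [dAC, hC]) (by linarith [dBC, hB, hC])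
      (by linarith [dB'C', hB', hC']) (by linarith [dB'A', hB', hA'])
  · exact core c (-s) w1 w2 hc (by linarith) (by linear_combination hcs)
      (by linarith [dAB, hB]) (by linarith [dCB, hB, hC])
      (by linarith [dB'C', hB', hC']) (by linarith [dA'C', hA', hC'])
  · exact core (-c) s w1 w2 (by linarith) hs (by linear_combination hcs)
      (by linarith [dBA, hB]) (by linarith [dBC, hB, hC])
      (by linarith [dC'B', hB', hC']) (by linarith [dC'A', hC', hA'])
  · exact core (-c) (-s) w1 w2 (by linarith) (by linarith) (by linear_combination hcs)
      (by linarith [dCA, hC]) (by linarith [dCB, hB, hC])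
      (by linarith [dC'B', hB', hC']) (by linarith [dA'B', hA', hB'])

lemma W_lower (t : ℝ) : 3 * Real.sqrt 3 / 2 ≤
    (sSup ((fun z : ℂ => z.re * cos t + z.im * sin t) '' equilateralTriangle) -
      sInf ((fun z : ℂ => z.re * cos t + z.im * sin t) '' equilateralTriangle)) *
    (sSup ((fun z : ℂ => z.re * (-sin t) + z.im * cos t) '' equilateralTriangle) -
      sInf ((fun z : ℂ => z.re * (-sin t) + z.im * cos t) '' equilateralTriangle)) := by
  rw [sSup_tri, sInf_tri, sSup_tri, sInf_tri]
  exact lower_aux (cos t) (sin t) (by rw [← Real.sin_sq_add_cos_sq t]; ring)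

lemma W_zero :
    (sSup ((fun z : ℂ => z.re * cos 0 + z.im * sin 0) '' equilateralTriangle) -
      sInf ((fun z : ℂ => z.re * cos 0 + z.im * sin 0) '' equilateralTriangle)) *
    (sSup ((fun z : ℂ => z.re * (-sin 0) + z.im * cos 0) '' equilateralTriangle) -
      sInf ((fun z : ℂ => z.re * (-sin 0) + z.im * cos 0) '' equilateralTriangle))
    = 3 * Real.sqrt 3 / 2 := by
  have h3 : (0:ℝ) ≤ Real.sqrt 3 := Real.sqrt_nonneg 3
  rw [sSup_tri, sInf_tri, sSup_tri, sInf_tri, Real.cos_zero, Real.sin_zero]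
  rw [show -(1/2)*(1:ℝ) + Real.sqrt 3/2*0 = -(1/2) by ring,
    show -(1/2)*(1:ℝ) - Real.sqrt 3/2*0 = -(1/2) by ring,
    show -(1/2)*(-0:ℝ) + Real.sqrt 3/2*1 = Real.sqrt 3/2 by ring,
    show -(1/2)*(-0:ℝ) - Real.sqrt 3/2*1 = -(Real.sqrt 3/2) by ring,
    max_self, min_self]
  rw [max_eq_left (by norm_num : -(1/2:ℝ) ≤ 1), min_eq_right (by norm_num : -(1/2:ℝ) ≤ 1),
    max_eq_left (by linarith : -(Real.sqrt 3/2) ≤ Real.sqrt 3/2),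
    min_eq_right (by linarith : -(Real.sqrt 3/2) ≤ Real.sqrt 3/2),
    max_eq_right (by linarith : -(0:ℝ) ≤ Real.sqrt 3/2),
    min_eq_right (by linarith : -(Real.sqrt 3/2) ≤ -(0:ℝ))]
  ring

noncomputable def triP : Set ℂ :=
  {z : ℂ | -(1/2) ≤ z.re ∧ z.re + Real.sqrt 3 * z.im ≤ 1 ∧ z.re - Real.sqrt 3 * z.im ≤ 1}

lemma sqrt3_pos : (0:ℝ) < Real.sqrt 3 := Real.sqrt_pos.2 (by norm_num)
lemma sqrt3_sq : Real.sqrt 3 * Real.sqrt 3 = 3 := Real.mul_self_sqrt (by norm_num)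

lemma tri_eq_triP : equilateralTriangle = triP := by
  rw [tri_eq]
  apply Set.Subset.antisymm
  · apply convexHull_min
    · rintro w (rfl | rfl | rfl) <;>
        simp only [triP, Set.mem_setOf_eq, vA, vB, vC, Complex.one_re, Complex.one_im] <;>
        refine ⟨by norm_num, ?_, ?_⟩ <;>
        nlinarith [sqrt3_sq, sqrt3_pos]
    · have e : triP = {z : ℂ | -(1/2) ≤ z.re} ∩
          ({z : ℂ | z.re + Real.sqrt 3 * z.im ≤ 1} ∩
            {z : ℂ | z.re - Real.sqrt 3 * z.im ≤ 1}) := by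
        ext z; simp [triP, and_assoc]
      rw [e]
      have l1 : IsLinearMap ℝ (fun z : ℂ => z.re) :=
        ⟨fun a b => Complex.add_re a b, fun r a => by simp [Complex.smul_re]⟩
      have l2 : IsLinearMap ℝ (fun z : ℂ => z.re + Real.sqrt 3 * z.im) := by
        constructor
        · intro a b; simp [Complex.add_re, Complex.add_im]; ring
        · intro r a; simp [Complex.smul_re, Complex.smul_im]; ring
      have l3 : IsLinearMap ℝ (fun z : ℂ => z.re - Real.sqrt 3 * z.im) := by
        constructor
        · intro a b; simp [Complex.add_re, Complex.add_im]; ring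
        · intro r a; simp [Complex.smul_re, Complex.smul_im]; ring
      exact (convex_halfSpace_ge l1 _).inter
        ((convex_halfSpace_le l2 _).inter (convex_halfSpace_le l3 _))
  · rintro z ⟨h1, h2, h3⟩
    set x := z.re with hx
    set y := z.im with hy
    have hx1 : x ≤ 1 := by linarith
    by_cases hdeg : x = 1
    · have hy0 : y = 0 := by
        have hle : Real.sqrt 3 * y ≤ 0 := by rw [hdeg] at h2; linarith
        have hge : 0 ≤ Real.sqrt 3 * y := by rw [hdeg] at h3; linarith
        have := le_antisymm hle hge
        have h3ne : Real.sqrt 3 ≠ 0 := ne_of_gt sqrt3_pos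
        exact (mul_eq_zero.1 this).resolve_left h3ne
      have hzA : z = vA := by
        apply Complex.ext <;> simp [vA, ← hx, ← hy, hdeg, hy0]
      rw [hzA]
      exact subset_convexHull _ _ (by simp)
    · have hxlt : x < 1 := lt_of_le_of_ne hx1 hdeg
      set l0 : ℝ := (2*x+1)/3 with hl0
      set l1 : ℝ := (1 - x + Real.sqrt 3 * y)/3 with hl1
      set l2 : ℝ := (1 - x - Real.sqrt 3 * y)/3 with hl2
      have hl0n : 0 ≤ l0 := by rw [hl0]; linarith
      have hl1n : 0 ≤ l1 := by rw [hl1]; linarith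
      have hl2n : 0 ≤ l2 := by rw [hl2]; linarith
      have ht : l1 + l2 = 2*(1-x)/3 := by rw [hl1, hl2]; ring
      have htpos : 0 < l1 + l2 := by rw [ht]; linarith
      set t := l1 + l2 with htt
      have hcomb : z = l0 • vA + (l1 • vB + l2 • vC) := by
        apply Complex.ext <;>
          simp [vA, vB, vC, Complex.add_re, Complex.add_im, Complex.smul_re, Complex.smul_im,
            ← hx, ← hy, hl0, hl1, hl2]
        · ring
        · field_simp
          ring_nf
          rw [show Real.sqrt 3^2 = 3 from by rw [sq]; exact sqrt3_sq]
          ring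
      have hu : (l1/t) • vB + (l2/t) • vC ∈ segment ℝ vB vC := by
        refine ⟨l1/t, l2/t, div_nonneg hl1n htpos.le, div_nonneg hl2n htpos.le, ?_, rfl⟩
        field_simp
        exact htt.symm
      rw [convexHull_insert (Set.insert_nonempty vB {vC}), mem_convexJoin]
      refine ⟨vA, Set.mem_singleton _, (l1/t) • vB + (l2/t) • vC,
        (by rw [convexHull_pair]; exact hu), ?_⟩
      refine ⟨l0, t, hl0n, htpos.le, by rw [htt, hl0, hl1, hl2]; ring, ?_⟩
      rw [smul_add, smul_smul, smul_smul, mul_div_cancel₀ _ (ne_of_gt htpos),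
        mul_div_cancel₀ _ (ne_of_gt htpos)]
      exact hcomb.symm

noncomputable def fl (a : ℝ) : ℝ := (a - 1)/Real.sqrt 3
noncomputable def gu (a : ℝ) : ℝ := (1 - a)/Real.sqrt 3

lemma triP_preimage : triP = Complex.measurableEquivRealProd ⁻¹'
    {p : ℝ × ℝ | p.1 ∈ Set.Icc (-(1/2):ℝ) 1 ∧ p.2 ∈ Set.Icc (fl p.1) (gu p.1)} := by
  ext z
  simp only [triP, Set.mem_setOf_eq, Set.mem_preimage, Complex.measurableEquivRealProd_apply,
    Set.mem_Icc, fl, gu]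
  constructor
  · rintro ⟨h1, h2, h3⟩
    refine ⟨⟨h1, by linarith⟩, ?_, ?_⟩
    · rw [div_le_iff₀ sqrt3_pos]; linarith
    · rw [le_div_iff₀ sqrt3_pos]; linarith
  · rintro ⟨⟨ha, hb⟩, hc, hd⟩
    rw [div_le_iff₀ sqrt3_pos] at hc
    rw [le_div_iff₀ sqrt3_pos] at hd
    exact ⟨ha, by linarith, by linarith⟩

lemma graph_null (f : ℝ → ℝ) (hf : Measurable f) :
    (volume : Measure (ℝ × ℝ)) {p : ℝ × ℝ | p.2 = f p.1} = 0 := by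
  rw [Measure.volume_eq_prod, Measure.prod_apply (measurableSet_graph hf)]
  have h : ∀ x : ℝ, (Prod.mk x ⁻¹' {p : ℝ × ℝ | p.2 = f p.1}) = {f x} := by
    intro x; ext y; simp
  simp [h]

lemma volume_tri : volume equilateralTriangle = ENNReal.ofReal (3 * Real.sqrt 3 / 4) := by
  have hfm : Measurable fl := by unfold fl; fun_prop
  have hgm : Measurable gu := by unfold gu; fun_prop
  have hmeas : MeasurableSet {p : ℝ × ℝ | p.1 ∈ Set.Icc (-(1/2):ℝ) 1 ∧
      p.2 ∈ Set.Icc (fl p.1) (gu p.1)} :=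
    measurableSet_region_between_cc hfm hgm measurableSet_Icc
  rw [tri_eq_triP, triP_preimage,
    Complex.volume_preserving_equiv_real_prod.measure_preimage hmeas.nullMeasurableSet]
  have hsub : {p : ℝ × ℝ | p.1 ∈ Set.Icc (-(1/2):ℝ) 1 ∧ p.2 ∈ Set.Icc (fl p.1) (gu p.1)} ⊆
      regionBetween fl gu (Set.Ioo (-(1/2)) 1) ∪
        ((({-(1/2), 1} : Set ℝ) ×ˢ (Set.univ : Set ℝ)) ∪
          ({p : ℝ × ℝ | p.2 = fl p.1} ∪ {p : ℝ × ℝ | p.2 = gu p.1})) := by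
    rintro ⟨a, b⟩ ⟨⟨ha1, ha2⟩, hb1, hb2⟩
    rcases eq_or_lt_of_le ha1 with he | ha1'
    · refine Or.inr (Or.inl ⟨?_, Set.mem_univ _⟩)
      rw [Set.mem_insert_iff]; exact Or.inl he.symm
    rcases eq_or_lt_of_le ha2 with he | ha2'
    · refine Or.inr (Or.inl ⟨?_, Set.mem_univ _⟩)
      rw [Set.mem_insert_iff]; right; simpa using he
    rcases eq_or_lt_of_le hb1 with he | hb1'
    · exact Or.inr (Or.inr (Or.inl he.symm))
    rcases eq_or_lt_of_le hb2 with he | hb2'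
    · exact Or.inr (Or.inr (Or.inr he))
    exact Or.inl ⟨⟨ha1', ha2'⟩, hb1', hb2'⟩
  have hnull1 : (volume : Measure (ℝ × ℝ)) ((({-(1/2), 1} : Set ℝ) ×ˢ (Set.univ : Set ℝ))) = 0 := by
    rw [Measure.volume_eq_prod, Measure.prod_prod, Set.Finite.measure_zero (Set.toFinite _), zero_mul]
  have hsub2 : regionBetween fl gu (Set.Ioo (-(1/2)) 1) ⊆
      {p : ℝ × ℝ | p.1 ∈ Set.Icc (-(1/2):ℝ) 1 ∧ p.2 ∈ Set.Icc (fl p.1) (gu p.1)} := by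
    rintro ⟨a, b⟩ ⟨ha, hb⟩
    exact ⟨Set.Ioo_subset_Icc_self ha, Set.Ioo_subset_Icc_self hb⟩
  have hkey : (volume : Measure (ℝ × ℝ))
      {p : ℝ × ℝ | p.1 ∈ Set.Icc (-(1/2):ℝ) 1 ∧ p.2 ∈ Set.Icc (fl p.1) (gu p.1)}
      = (volume : Measure (ℝ × ℝ)) (regionBetween fl gu (Set.Ioo (-(1/2)) 1)) := by
    apply le_antisymm
    · have hrest : (volume : Measure (ℝ × ℝ))
          ((({-(1/2), 1} : Set ℝ) ×ˢ (Set.univ : Set ℝ)) ∪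
            ({p : ℝ × ℝ | p.2 = fl p.1} ∪ {p : ℝ × ℝ | p.2 = gu p.1})) = 0 :=
        measure_union_null hnull1
          (measure_union_null (graph_null fl hfm) (graph_null gu hgm))
      refine le_trans (measure_mono hsub) ?_
      refine le_trans (measure_union_le _ _) ?_
      rw [hrest, add_zero]
    · exact measure_mono hsub2
  rw [hkey]
  have hflc : Continuous fl := by unfold fl; fun_prop
  have hguc : Continuous gu := by unfold gu; fun_prop
  have f_int : IntegrableOn fl (Set.Ioo (-(1/2):ℝ) 1) volume :=
    (hflc.integrableOn_Icc).mono_set Set.Ioo_subset_Icc_self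
  have g_int : IntegrableOn gu (Set.Ioo (-(1/2):ℝ) 1) volume :=
    (hguc.integrableOn_Icc).mono_set Set.Ioo_subset_Icc_self
  rw [Measure.volume_eq_prod, volume_regionBetween_eq_integral f_int g_int measurableSet_Ioo]
  congr 1
  have hfun : (gu - fl) = fun a : ℝ => 2/Real.sqrt 3 - 2/Real.sqrt 3 * a := by
    funext a; simp only [Pi.sub_apply, fl, gu]; ring
  rw [hfun, ← MeasureTheory.integral_Ioc_eq_integral_Ioo,
    ← intervalIntegral.integral_of_le (by norm_num : (-(1/2):ℝ) ≤ 1),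
    intervalIntegral.integral_sub intervalIntegrable_const
      ((by fun_prop : Continuous (fun x : ℝ => 2/Real.sqrt 3 * x)).intervalIntegrable _ _),
    intervalIntegral.integral_const, intervalIntegral.integral_const_mul, integral_id,
    smul_eq_mul]
  have h3ne : Real.sqrt 3 ≠ 0 := ne_of_gt sqrt3_pos
  field_simp
  linear_combination (-12) * sqrt3_sq
  intro x hx
  unfold fl gu
  exact (div_le_div_iff_of_pos_right sqrt3_pos).2 (by linarith [hx.2])

/-- For the equilateral triangle with vertices the cube roots of unity, the minimum over
directions of the product of the widths in two perpendicular directions is `3√3/2`, which is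
exactly twice the area `3√3/4` of the triangle. -/
theorem equilateral_triangle_min_width_product :
    sInf ((fun t : ℝ =>
        (sSup ((fun z : ℂ => z.re * cos t + z.im * sin t) '' equilateralTriangle) -
          sInf ((fun z : ℂ => z.re * cos t + z.im * sin t) '' equilateralTriangle)) *
        (sSup ((fun z : ℂ => z.re * (-sin t) + z.im * cos t) '' equilateralTriangle) -
          sInf ((fun z : ℂ => z.re * (-sin t) + z.im * cos t) '' equilateralTriangle))) ''
      Set.Ico 0 (2 * π))
      = 3 * Real.sqrt 3 / 2 ∧
    (volume equilateralTriangle).toReal = 3 * Real.sqrt 3 / 4 ∧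
    3 * Real.sqrt 3 / 2 = 2 * (volume equilateralTriangle).toReal := by
  have harea : (volume equilateralTriangle).toReal = 3 * Real.sqrt 3 / 4 := by
    rw [volume_tri, ENNReal.toReal_ofReal (by positivity)]
  have h0mem : (0:ℝ) ∈ Set.Ico (0:ℝ) (2*π) := ⟨le_refl 0, by positivity⟩
  refine ⟨?_, harea, by rw [harea]; ring⟩
  apply le_antisymm
  · exact csInf_le ⟨3*Real.sqrt 3/2, by rintro x ⟨t, ht, rfl⟩; exact W_lower t⟩
      ⟨0, h0mem, W_zero⟩
  · exact le_csInf ⟨_, ⟨0, h0mem, rfl⟩⟩ (by rintro x ⟨t, ht, rfl⟩; exact W_lower t)
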